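/- ∑_{m₁,…,m₅ ≥ 1} 1/(m₁⁴ (m₁+m₂)⁴ (m₁+m₂+m₃)⁴ (m₁+m₂+m₃+m₄)⁴ (m₁+m₂+m₃+m₄+m₅)⁴) = π²⁰/548828480360160000. -/

import Mathlib

open Finset Filter Real Topology

/-! Auxiliary definitions and lemmas for ζ(4,4,4,4,4). -/

noncomputable def pf : ℕ+ → ℝ := fun n => 1 / ((n : ℕ) : ℝ) ^ 4
lemma pf_nonneg (n : ℕ+) : 0 ≤ pf n := by unfold pf; positivity

lemma pf_antitone {a b : ℕ+} (h : a ≤ b) : pf b ≤ pf a := by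
  unfold pf
  have h1 : (0:ℝ) < ((a : ℕ) : ℝ) := by exact_mod_cast a.pos
  have h2 : ((a:ℕ):ℝ) ≤ ((b:ℕ):ℝ) := by exact_mod_cast h
  gcongr

lemma summable_pf : Summable pf := by
  have hinj : Function.Injective ((↑) : ℕ+ → ℕ) := fun a b h => PNat.coe_injective h
  have h0 : ∀ x ∉ Set.range ((↑) : ℕ+ → ℕ), 1 / (x : ℝ) ^ 4 = 0 := by
    rintro x hx
    have : x = 0 := by
      by_contra h
      exact hx ⟨⟨x, Nat.pos_of_ne_zero h⟩, rfl⟩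
    subst this; norm_num
  have hs : Summable (fun n : ℕ => 1 / (n : ℝ) ^ 4) := by
    simpa using Real.summable_one_div_nat_pow.2 (by norm_num : 1 < 4)
  exact (Function.Injective.summable_iff hinj h0).2 hs

abbrev P5 := ℕ+ × ℕ+ × ℕ+ × ℕ+ × ℕ+

noncomputable def G : P5 → ℝ := fun p =>
  pf p.1 * pf (p.1 + p.2.1) * pf (p.1 + p.2.1 + p.2.2.1) *
    pf (p.1 + p.2.1 + p.2.2.1 + p.2.2.2.1) *
    pf (p.1 + p.2.1 + p.2.2.1 + p.2.2.2.1 + p.2.2.2.2)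

set_option maxHeartbeats 1000000 in
lemma summable_G : Summable G := by
  have m2 : Summable (fun x : ℕ+ × ℕ+ => pf x.1 * pf x.2) :=
    summable_pf.mul_of_nonneg summable_pf pf_nonneg pf_nonneg
  have m3 : Summable (fun x : ℕ+ × (ℕ+ × ℕ+) => pf x.1 * (pf x.2.1 * pf x.2.2)) :=
    summable_pf.mul_of_nonneg m2 pf_nonneg (fun x => mul_nonneg (pf_nonneg _) (pf_nonneg _))
  have m4 : Summable (fun x : ℕ+ × (ℕ+ × (ℕ+ × ℕ+)) =>
      pf x.1 * (pf x.2.1 * (pf x.2.2.1 * pf x.2.2.2))) :=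
    summable_pf.mul_of_nonneg m3 pf_nonneg
      (fun x => mul_nonneg (pf_nonneg _) (mul_nonneg (pf_nonneg _) (pf_nonneg _)))
  have m5 : Summable (fun x : P5 =>
      pf x.1 * (pf x.2.1 * (pf x.2.2.1 * (pf x.2.2.2.1 * pf x.2.2.2.2)))) :=
    summable_pf.mul_of_nonneg m4 pf_nonneg
      (fun x => mul_nonneg (pf_nonneg _) (mul_nonneg (pf_nonneg _)
        (mul_nonneg (pf_nonneg _) (pf_nonneg _))))
  refine m5.of_nonneg_of_le (fun p => ?_) (fun p => ?_)
  · exact mul_nonneg (mul_nonneg (mul_nonneg (mul_nonneg (pf_nonneg _) (pf_nonneg _))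
      (pf_nonneg _)) (pf_nonneg _)) (pf_nonneg _)
  · unfold G
    obtain ⟨a, b, c, d, e⟩ := p
    dsimp only
    have h1 : pf (a + b) ≤ pf b := pf_antitone (PNat.lt_add_left b a).le
    have h2 : pf (a + b + c) ≤ pf c := pf_antitone (PNat.lt_add_left c (a + b)).le
    have h3 : pf (a + b + c + d) ≤ pf d := pf_antitone (PNat.lt_add_left d (a + b + c)).le
    have h4 : pf (a + b + c + d + e) ≤ pf e := pf_antitone (PNat.lt_add_left e (a+b+c+d)).le
    calc pf a * pf (a+b) * pf (a+b+c) * pf (a+b+c+d) * pf (a+b+c+d+e)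
        ≤ pf a * pf b * pf c * pf d * pf e := by
          gcongr <;> first | exact pf_nonneg _ | exact mul_nonneg (mul_nonneg (mul_nonneg (pf_nonneg _) (pf_nonneg _)) (pf_nonneg _)) (pf_nonneg _) | exact mul_nonneg (mul_nonneg (pf_nonneg _) (pf_nonneg _)) (pf_nonneg _) | exact mul_nonneg (pf_nonneg _) (pf_nonneg _)
      _ = pf a * (pf b * (pf c * (pf d * pf e))) := by ring

lemma nested_eq : (∑' (m₁ : ℕ+), ∑' (m₂ : ℕ+), ∑' (m₃ : ℕ+), ∑' (m₄ : ℕ+), ∑' (m₅ : ℕ+),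
    G (m₁, m₂, m₃, m₄, m₅)) = ∑' p : P5, G p := by
  rw [Summable.tsum_prod' summable_G (fun b => summable_G.prod_factor b)]
  refine tsum_congr fun m₁ => ?_
  rw [Summable.tsum_prod' (summable_G.prod_factor m₁)
    (fun b => (summable_G.prod_factor m₁).prod_factor b)]
  refine tsum_congr fun m₂ => ?_
  rw [Summable.tsum_prod' ((summable_G.prod_factor m₁).prod_factor m₂)
    (fun b => ((summable_G.prod_factor m₁).prod_factor m₂).prod_factor b)]
  refine tsum_congr fun m₃ => ?_
  rw [Summable.tsum_prod' (((summable_G.prod_factor m₁).prod_factor m₂).prod_factor m₃)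
    (fun b => (((summable_G.prod_factor m₁).prod_factor m₂).prod_factor m₃).prod_factor b)]
noncomputable def hset : Finset ℕ+ → ℝ := fun t => if t.card = 5 then ∏ i ∈ t, pf i else 0

section sorted
variable {a b c d e : ℕ+}

lemma sset_val (hab : a < b) (hbc : b < c) (hcd : c < d) (hde : d < e) :
    ({a,b,c,d,e} : Finset ℕ+).val = ([a,b,c,d,e] : List ℕ+) := by
  have hac := hab.trans hbc
  have had := hac.trans hcd
  have hae := had.trans hde
  have hbd := hbc.trans hcd
  have hbe := hbd.trans hde
  have hce := hcd.trans hde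
  have hna : a ∉ ({b,c,d,e} : Finset ℕ+) := by
    simp only [mem_insert, mem_singleton]
    push_neg
    exact ⟨hab.ne, hac.ne, had.ne, hae.ne⟩
  have hnb : b ∉ ({c,d,e} : Finset ℕ+) := by
    simp only [mem_insert, mem_singleton]
    push_neg
    exact ⟨hbc.ne, hbd.ne, hbe.ne⟩
  have hnc : c ∉ ({d,e} : Finset ℕ+) := by
    simp only [mem_insert, mem_singleton]
    push_neg
    exact ⟨hcd.ne, hce.ne⟩
  have hnd : d ∉ ({e} : Finset ℕ+) := by
    simp only [mem_singleton]
    exact hde.ne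
  show (insert a (insert b (insert c (insert d ({e} : Finset ℕ+))))).val = _
  rw [Finset.insert_val_of_notMem hna, Finset.insert_val_of_notMem hnb,
    Finset.insert_val_of_notMem hnc, Finset.insert_val_of_notMem hnd]
  rfl

lemma sset_card (hab : a < b) (hbc : b < c) (hcd : c < d) (hde : d < e) :
    ({a,b,c,d,e} : Finset ℕ+).card = 5 := by
  rw [Finset.card_def, sset_val hab hbc hcd hde]
  rfl

lemma sset_prod (hab : a < b) (hbc : b < c) (hcd : c < d) (hde : d < e) :
    (∏ i ∈ ({a,b,c,d,e} : Finset ℕ+), pf i) = pf a * pf b * pf c * pf d * pf e := by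
  rw [Finset.prod, sset_val hab hbc hcd hde]
  simp [Multiset.map_cons]
  ring

lemma sset_sorted (hab : a < b) (hbc : b < c) (hcd : c < d) (hde : d < e) :
    List.Pairwise (· < ·) ([a,b,c,d,e] : List ℕ+) := by
  have hac := hab.trans hbc
  have had := hac.trans hcd
  have hae := had.trans hde
  have hbd := hbc.trans hcd
  have hbe := hbd.trans hde
  have hce := hcd.trans hde
  refine List.Pairwise.cons ?_ (List.Pairwise.cons ?_ (List.Pairwise.cons ?_
    (List.Pairwise.cons ?_ (List.pairwise_singleton _ _)))) <;>
    (intro x hx; fin_cases hx <;> assumption)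

lemma sset_inj {a' b' c' d' e' : ℕ+}
    (hab : a < b) (hbc : b < c) (hcd : c < d) (hde : d < e)
    (hab' : a' < b') (hbc' : b' < c') (hcd' : c' < d') (hde' : d' < e')
    (heq : ({a,b,c,d,e} : Finset ℕ+) = {a',b',c',d',e'}) :
    a = a' ∧ b = b' ∧ c = c' ∧ d = d' ∧ e = e' := by
  have hv := congrArg Finset.val heq
  rw [sset_val hab hbc hcd hde, sset_val hab' hbc' hcd' hde'] at hv
  have hp : ([a,b,c,d,e] : List ℕ+).Perm [a',b',c',d',e'] := Multiset.coe_eq_coe.1 hv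
  haveI : IsAntisymm ℕ+ (· < ·) := ⟨fun x y h1 h2 => ((lt_asymm h1) h2).elim⟩
  have := List.Perm.eq_of_pairwise' (sset_sorted hab hbc hcd hde)
    (sset_sorted hab' hbc' hcd' hde') hp
  simp only [List.cons.injEq, and_true] at this
  tauto

end sorted
def iota : P5 → Finset ℕ+ := fun p =>
  {p.1, p.1 + p.2.1, p.1 + p.2.1 + p.2.2.1, p.1 + p.2.1 + p.2.2.1 + p.2.2.2.1,
    p.1 + p.2.1 + p.2.2.1 + p.2.2.2.1 + p.2.2.2.2}

lemma iota_inj : Function.Injective iota := by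
  rintro ⟨a, b, c, d, e⟩ ⟨a', b', c', d', e'⟩ h
  have H := sset_inj (PNat.lt_add_right a b) (PNat.lt_add_right _ c) (PNat.lt_add_right _ d)
    (PNat.lt_add_right _ e) (PNat.lt_add_right a' b') (PNat.lt_add_right _ c')
    (PNat.lt_add_right _ d') (PNat.lt_add_right _ e') h
  obtain ⟨h1, h2, h3, h4, h5⟩ := H
  subst h1
  have hb : b = b' := by exact add_left_cancel h2
  subst hb
  have hc : c = c' := by exact add_left_cancel h3
  subst hc
  have hd : d = d' := by exact add_left_cancel h4
  subst hd
  have he : e = e' := by exact add_left_cancel h5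
  subst he
  rfl

lemma hset_iota (p : P5) : hset (iota p) = G p := by
  obtain ⟨a, b, c, d, e⟩ := p
  have c1 := PNat.lt_add_right a b
  have c2 := PNat.lt_add_right (a + b) c
  have c3 := PNat.lt_add_right (a + b + c) d
  have c4 := PNat.lt_add_right (a + b + c + d) e
  show hset {a, a+b, a+b+c, a+b+c+d, a+b+c+d+e} = _
  rw [hset, if_pos (sset_card c1 c2 c3 c4), sset_prod c1 c2 c3 c4]
  rfl

lemma hset_range : ∀ t ∉ Set.range iota, hset t = 0 := by
  intro t ht
  by_contra hne
  have hcard : t.card = 5 := by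
    by_contra h
    exact hne (if_neg h)
  apply ht
  have hlen : (t.sort (· ≤ ·)).length = 5 := by rw [Finset.length_sort, hcard]
  obtain ⟨a, b, c, d, e, hl⟩ : ∃ a b c d e, t.sort (· ≤ ·) = [a, b, c, d, e] := by
    rcases hsort : t.sort (· ≤ ·) with _ | ⟨a, _ | ⟨b, _ | ⟨c, _ | ⟨d, _ | ⟨e, _ | ⟨x, l⟩⟩⟩⟩⟩⟩ <;>
      simp_all
  have hs := List.sortedLT_iff_pairwise.1 t.sortedLT_sort
  rw [hl] at hs
  simp only [List.pairwise_cons, List.mem_cons, List.mem_singleton, List.not_mem_nil] at hs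
  have hab : a < b := by tauto
  have hbc : b < c := by tauto
  have hcd : c < d := by tauto
  have hde : d < e := by tauto
  have hval : t.val = ([a,b,c,d,e] : List ℕ+) := by
    rw [← Finset.sort_eq t (· ≤ ·), hl]
  have hteq : t = ({a,b,c,d,e} : Finset ℕ+) :=
    Finset.val_injective (by rw [hval, sset_val hab hbc hcd hde])
  refine ⟨(a, b - a, c - b, d - c, e - d), ?_⟩
  show ({a, a + (b-a), a + (b-a) + (c-b), a + (b-a) + (c-b) + (d-c),
    a + (b-a) + (c-b) + (d-c) + (e-d)} : Finset ℕ+) = t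
  rw [PNat.add_sub_of_lt hab, PNat.add_sub_of_lt hbc, PNat.add_sub_of_lt hcd,
    PNat.add_sub_of_lt hde, hteq]
noncomputable def ew (k : ℕ) (u : Finset ℕ+) : ℝ := ∑ t ∈ u.powersetCard k, ∏ i ∈ t, pf i
noncomputable def pw (j : ℕ) (u : Finset ℕ+) : ℝ := ∑ i ∈ u, pf i ^ j

lemma ew_zero (u : Finset ℕ+) : ew 0 u = 1 := by simp [ew]

lemma ew_empty (k : ℕ) : ew (k + 1) ∅ = 0 := by
  rw [ew, Finset.powersetCard_eq_empty.2 (by simp), Finset.sum_empty]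

lemma pw_insert (j : ℕ) {a : ℕ+} {u : Finset ℕ+} (ha : a ∉ u) :
    pw j (insert a u) = pf a ^ j + pw j u := by
  rw [pw, Finset.sum_insert ha, pw]

lemma ew_insert (k : ℕ) {a : ℕ+} {u : Finset ℕ+} (ha : a ∉ u) :
    ew (k + 1) (insert a u) = ew (k + 1) u + pf a * ew k u := by
  rw [ew, Finset.powersetCard_succ_insert ha, Finset.sum_union, Finset.sum_image]
  · rw [← ew]
    congr 1
    rw [Finset.sum_congr rfl (fun t ht => Finset.prod_insert
      (fun hmem => ha ((Finset.mem_powersetCard.1 ht).1 hmem)))]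
    rw [ew, ← Finset.mul_sum]
  · intro t1 h1 t2 h2 heq
    have ha1 : a ∉ t1 := fun hmem => ha ((Finset.mem_powersetCard.1 h1).1 hmem)
    have ha2 : a ∉ t2 := fun hmem => ha ((Finset.mem_powersetCard.1 h2).1 hmem)
    rw [← Finset.erase_insert ha1, ← Finset.erase_insert ha2, heq]
  · rw [Finset.disjoint_left]
    intro t ht1 ht2
    obtain ⟨t', ht', rfl⟩ := Finset.mem_image.1 ht2
    have : a ∉ t' ∪ {a} → False := by simp
    exact (fun hmem => ha ((Finset.mem_powersetCard.1 ht1).1 hmem)) (by simp)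

lemma newton (u : Finset ℕ+) :
    ew 1 u = pw 1 u ∧
    2 * ew 2 u = pw 1 u ^ 2 - pw 2 u ∧
    6 * ew 3 u = pw 1 u ^ 3 - 3 * pw 1 u * pw 2 u + 2 * pw 3 u ∧
    24 * ew 4 u = pw 1 u ^ 4 - 6 * pw 1 u ^ 2 * pw 2 u + 3 * pw 2 u ^ 2
      + 8 * pw 1 u * pw 3 u - 6 * pw 4 u ∧
    120 * ew 5 u = pw 1 u ^ 5 - 10 * pw 1 u ^ 3 * pw 2 u + 15 * pw 1 u * pw 2 u ^ 2
      + 20 * pw 1 u ^ 2 * pw 3 u - 20 * pw 2 u * pw 3 u - 30 * pw 1 u * pw 4 u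
      + 24 * pw 5 u := by
  induction u using Finset.induction_on with
  | empty => simp [ew_empty, pw]
  | insert _ _ ha =>
    rename_i a u ih
    obtain ⟨i1, i2, i3, i4, i5⟩ := ih
    have hE1 : ew 1 (insert a u) = ew 1 u + pf a * ew 0 u := ew_insert 0 ha
    have hE2 : ew 2 (insert a u) = ew 2 u + pf a * ew 1 u := ew_insert 1 ha
    have hE3 : ew 3 (insert a u) = ew 3 u + pf a * ew 2 u := ew_insert 2 ha
    have hE4 : ew 4 (insert a u) = ew 4 u + pf a * ew 3 u := ew_insert 3 ha
    have hE5 : ew 5 (insert a u) = ew 5 u + pf a * ew 4 u := ew_insert 4 ha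
    rw [hE1, hE2, hE3, hE4, hE5, ew_zero,
      pw_insert 1 ha, pw_insert 2 ha, pw_insert 3 ha, pw_insert 4 ha, pw_insert 5 ha]
    set x := pf a
    refine ⟨by linear_combination i1, ?_, ?_, ?_, ?_⟩
    · linear_combination i2 + 2 * x * i1
    · linear_combination i3 + 3 * x * i2
    · linear_combination i4 + 4 * x * i3
    · linear_combination i5 + 5 * x * i4
lemma b5 : bernoulli' 5 = 0 := bernoulli'_eq_zero_of_odd (by decide) (by norm_num)
lemma b7 : bernoulli' 7 = 0 := bernoulli'_eq_zero_of_odd (by decide) (by norm_num)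
lemma b9 : bernoulli' 9 = 0 := bernoulli'_eq_zero_of_odd (by decide) (by norm_num)
lemma b11 : bernoulli' 11 = 0 := bernoulli'_eq_zero_of_odd (by decide) (by norm_num)
lemma b13 : bernoulli' 13 = 0 := bernoulli'_eq_zero_of_odd (by decide) (by norm_num)
lemma b15 : bernoulli' 15 = 0 := bernoulli'_eq_zero_of_odd (by decide) (by norm_num)
lemma b17 : bernoulli' 17 = 0 := bernoulli'_eq_zero_of_odd (by decide) (by norm_num)
lemma b19 : bernoulli' 19 = 0 := bernoulli'_eq_zero_of_odd (by decide) (by norm_num)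

lemma b6 : bernoulli' 6 = 1 / 42 := by
  rw [bernoulli'_def]
  norm_num [Finset.sum_range_succ, bernoulli'_zero, bernoulli'_one, bernoulli'_two,
    bernoulli'_three, bernoulli'_four, b5, Nat.choose]

lemma b8 : bernoulli' 8 = -1 / 30 := by
  rw [bernoulli'_def]
  norm_num [Finset.sum_range_succ, bernoulli'_zero, bernoulli'_one, bernoulli'_two,
    bernoulli'_three, bernoulli'_four, b5, b6, b7, Nat.choose]

lemma b10 : bernoulli' 10 = 5 / 66 := by
  rw [bernoulli'_def]
  norm_num [Finset.sum_range_succ, bernoulli'_zero, bernoulli'_one, bernoulli'_two,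
    bernoulli'_three, bernoulli'_four, b5, b6, b7, b8, b9, Nat.choose]

lemma b12 : bernoulli' 12 = -691 / 2730 := by
  rw [bernoulli'_def]
  norm_num [Finset.sum_range_succ, bernoulli'_zero, bernoulli'_one, bernoulli'_two,
    bernoulli'_three, bernoulli'_four, b5, b6, b7, b8, b9, b10, b11, Nat.choose]

lemma b14 : bernoulli' 14 = 7 / 6 := by
  rw [bernoulli'_def]
  norm_num [Finset.sum_range_succ, bernoulli'_zero, bernoulli'_one, bernoulli'_two,
    bernoulli'_three, bernoulli'_four, b5, b6, b7, b8, b9, b10, b11, b12, b13, Nat.choose]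

lemma b16 : bernoulli' 16 = -3617 / 510 := by
  rw [bernoulli'_def]
  norm_num [Finset.sum_range_succ, bernoulli'_zero, bernoulli'_one, bernoulli'_two,
    bernoulli'_three, bernoulli'_four, b5, b6, b7, b8, b9, b10, b11, b12, b13, b14, b15,
    Nat.choose]

lemma b18 : bernoulli' 18 = 43867 / 798 := by
  rw [bernoulli'_def]
  norm_num [Finset.sum_range_succ, bernoulli'_zero, bernoulli'_one, bernoulli'_two,
    bernoulli'_three, bernoulli'_four, b5, b6, b7, b8, b9, b10, b11, b12, b13, b14, b15,
    b16, b17, Nat.choose]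

lemma b20 : bernoulli' 20 = -174611 / 330 := by
  rw [bernoulli'_def]
  norm_num [Finset.sum_range_succ, bernoulli'_zero, bernoulli'_one, bernoulli'_two,
    bernoulli'_three, bernoulli'_four, b5, b6, b7, b8, b9, b10, b11, b12, b13, b14, b15,
    b16, b17, b18, b19, Nat.choose]
lemma hasSum_pf_pow (j : ℕ) (hj : 2 * j ≠ 0) (V : ℝ)
    (hV : HasSum (fun n : ℕ => 1 / (n : ℝ) ^ (2 * (2 * j))) V) :
    HasSum (fun n : ℕ+ => pf n ^ j) V := by
  have hinj : Function.Injective ((↑) : ℕ+ → ℕ) := fun a b h => PNat.coe_injective h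
  have h0 : ∀ x ∉ Set.range ((↑) : ℕ+ → ℕ), 1 / (x : ℝ) ^ (2 * (2 * j)) = 0 := by
    rintro x hx
    have : x = 0 := by
      by_contra h
      exact hx ⟨⟨x, Nat.pos_of_ne_zero h⟩, rfl⟩
    subst this
    have : 2 * (2 * j) ≠ 0 := by omega
    simp [pow_eq_zero_iff, this]
  have := (Function.Injective.hasSum_iff hinj h0).2 hV
  refine this.congr_fun fun n => ?_
  show pf n ^ j = 1 / ((n : ℕ) : ℝ) ^ (2 * (2 * j))
  rw [pf, div_pow, one_pow, ← pow_mul]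
  ring_nf
lemma zv1 : HasSum (fun n : ℕ+ => pf n ^ 1) (π ^ 4 / 90) := by
  have h := hasSum_pf_pow 1 (by norm_num) _ (hasSum_zeta_nat (k := 2 * 1) (by norm_num))
  convert h using 1
  rw [bernoulli_eq_bernoulli'_of_ne_one (by norm_num), bernoulli'_four]
  norm_num [Nat.factorial]
  ring

lemma zv2 : HasSum (fun n : ℕ+ => pf n ^ 2) (π ^ 8 / 9450) := by
  have h := hasSum_pf_pow 2 (by norm_num) _ (hasSum_zeta_nat (k := 2 * 2) (by norm_num))
  convert h using 1
  rw [bernoulli_eq_bernoulli'_of_ne_one (by norm_num), b8]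
  norm_num [Nat.factorial]
  ring

lemma zv3 : HasSum (fun n : ℕ+ => pf n ^ 3) (691 * π ^ 12 / 638512875) := by
  have h := hasSum_pf_pow 3 (by norm_num) _ (hasSum_zeta_nat (k := 2 * 3) (by norm_num))
  convert h using 1
  rw [bernoulli_eq_bernoulli'_of_ne_one (by norm_num), b12]
  norm_num [Nat.factorial]
  ring

lemma zv4 : HasSum (fun n : ℕ+ => pf n ^ 4) (3617 * π ^ 16 / 325641566250) := by
  have h := hasSum_pf_pow 4 (by norm_num) _ (hasSum_zeta_nat (k := 2 * 4) (by norm_num))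
  convert h using 1
  rw [bernoulli_eq_bernoulli'_of_ne_one (by norm_num), b16]
  norm_num [Nat.factorial]
  ring

lemma zv5 : HasSum (fun n : ℕ+ => pf n ^ 5) (174611 * π ^ 20 / 1531329465290625) := by
  have h := hasSum_pf_pow 5 (by norm_num) _ (hasSum_zeta_nat (k := 2 * 5) (by norm_num))
  convert h using 1
  rw [bernoulli_eq_bernoulli'_of_ne_one (by norm_num), b20]
  norm_num [Nat.factorial]
  ring

noncomputable def T : ℝ := ∑' p : P5, G p

lemma hasSum_G : HasSum G T := summable_G.hasSum

lemma hasSum_hset : HasSum hset T := by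
  refine (iota_inj.hasSum_iff hset_range).1 ?_
  exact hasSum_G.congr_fun (fun p => hset_iota p)

lemma ew5_eq (u : Finset ℕ+) : ∑ t ∈ u.powerset, hset t = ew 5 u := by
  rw [ew, Finset.powersetCard_eq_filter, Finset.sum_filter]
  rfl

lemma tendsto_ew5 : Tendsto (fun u : Finset ℕ+ => ew 5 u) atTop (𝓝 T) := by
  have hmap : Tendsto (fun u : Finset ℕ+ => u.powerset) atTop atTop :=
    tendsto_atTop_finset_of_monotone (fun u v h => Finset.powerset_mono.2 h)
      (fun t => ⟨t, Finset.mem_powerset_self t⟩)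
  have h2 := hasSum_hset.comp hmap
  refine h2.congr' ?_
  filter_upwards with u
  exact ew5_eq u

lemma T_val : T = π ^ 20 / 548828480360160000 := by
  have t1 : Tendsto (fun u : Finset ℕ+ => pw 1 u) atTop (𝓝 (π ^ 4 / 90)) := zv1
  have t2 : Tendsto (fun u : Finset ℕ+ => pw 2 u) atTop (𝓝 (π ^ 8 / 9450)) := zv2
  have t3 : Tendsto (fun u : Finset ℕ+ => pw 3 u) atTop
    (𝓝 (691 * π ^ 12 / 638512875)) := zv3
  have t4 : Tendsto (fun u : Finset ℕ+ => pw 4 u) atTop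
    (𝓝 (3617 * π ^ 16 / 325641566250)) := zv4
  have t5 : Tendsto (fun u : Finset ℕ+ => pw 5 u) atTop
    (𝓝 (174611 * π ^ 20 / 1531329465290625)) := zv5
  have hfe : (fun u : Finset ℕ+ => 120 * ew 5 u) =
      fun u => pw 1 u ^ 5 - 10 * (pw 1 u ^ 3 * pw 2 u) + 15 * (pw 1 u * pw 2 u ^ 2)
        + 20 * (pw 1 u ^ 2 * pw 3 u) - 20 * (pw 2 u * pw 3 u) - 30 * (pw 1 u * pw 4 u)
        + 24 * pw 5 u :=
    funext fun u => by linear_combination (newton u).2.2.2.2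
  have tQ : Tendsto (fun u : Finset ℕ+ => 120 * ew 5 u) atTop
      (𝓝 ((π ^ 4 / 90) ^ 5 - 10 * ((π ^ 4 / 90) ^ 3 * (π ^ 8 / 9450))
        + 15 * ((π ^ 4 / 90) * (π ^ 8 / 9450) ^ 2)
        + 20 * ((π ^ 4 / 90) ^ 2 * (691 * π ^ 12 / 638512875))
        - 20 * ((π ^ 8 / 9450) * (691 * π ^ 12 / 638512875))
        - 30 * ((π ^ 4 / 90) * (3617 * π ^ 16 / 325641566250))
        + 24 * (174611 * π ^ 20 / 1531329465290625))) := by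
    rw [hfe]
    exact ((((((t1.pow 5).sub (((t1.pow 3).mul t2).const_mul 10)).add
      ((t1.mul (t2.pow 2)).const_mul 15)).add
      (((t1.pow 2).mul t3).const_mul 20)).sub
      ((t2.mul t3).const_mul 20)).sub
      ((t1.mul t4).const_mul 30)).add (t5.const_mul 24)
  have tT : Tendsto (fun u : Finset ℕ+ => 120 * ew 5 u) atTop (𝓝 (120 * T)) :=
    tendsto_ew5.const_mul 120
  have key := tendsto_nhds_unique tT tQ
  have : T = ((π ^ 4 / 90) ^ 5 - 10 * ((π ^ 4 / 90) ^ 3 * (π ^ 8 / 9450))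
        + 15 * ((π ^ 4 / 90) * (π ^ 8 / 9450) ^ 2)
        + 20 * ((π ^ 4 / 90) ^ 2 * (691 * π ^ 12 / 638512875))
        - 20 * ((π ^ 8 / 9450) * (691 * π ^ 12 / 638512875))
        - 30 * ((π ^ 4 / 90) * (3617 * π ^ 16 / 325641566250))
        + 24 * (174611 * π ^ 20 / 1531329465290625)) / 120 := by linarith
  rw [this]
  ring_nf

theorem stmt_12 :
    ∑' (m₁ : ℕ+), ∑' (m₂ : ℕ+), ∑' (m₃ : ℕ+), ∑' (m₄ : ℕ+), ∑' (m₅ : ℕ+),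
        (1 : ℝ) /
          (((m₁ : ℕ) : ℝ) ^ 4 *
            (((m₁ : ℕ) : ℝ) + ((m₂ : ℕ) : ℝ)) ^ 4 *
            (((m₁ : ℕ) : ℝ) + ((m₂ : ℕ) : ℝ) + ((m₃ : ℕ) : ℝ)) ^ 4 *
            (((m₁ : ℕ) : ℝ) + ((m₂ : ℕ) : ℝ) + ((m₃ : ℕ) : ℝ) + ((m₄ : ℕ) : ℝ)) ^ 4 *
            (((m₁ : ℕ) : ℝ) + ((m₂ : ℕ) : ℝ) + ((m₃ : ℕ) : ℝ) + ((m₄ : ℕ) : ℝ) + ((m₅ : ℕ) : ℝ)) ^ 4)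
      = Real.pi ^ 20 / 548828480360160000 := by
  have hsummand : ∀ m₁ m₂ m₃ m₄ m₅ : ℕ+,
      (1 : ℝ) /
          (((m₁ : ℕ) : ℝ) ^ 4 *
            (((m₁ : ℕ) : ℝ) + ((m₂ : ℕ) : ℝ)) ^ 4 *
            (((m₁ : ℕ) : ℝ) + ((m₂ : ℕ) : ℝ) + ((m₃ : ℕ) : ℝ)) ^ 4 *
            (((m₁ : ℕ) : ℝ) + ((m₂ : ℕ) : ℝ) + ((m₃ : ℕ) : ℝ) + ((m₄ : ℕ) : ℝ)) ^ 4 *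
            (((m₁ : ℕ) : ℝ) + ((m₂ : ℕ) : ℝ) + ((m₃ : ℕ) : ℝ) + ((m₄ : ℕ) : ℝ) + ((m₅ : ℕ) : ℝ)) ^ 4)
        = G (m₁, m₂, m₃, m₄, m₅) := by
    intro m₁ m₂ m₃ m₄ m₅
    simp only [G, pf, PNat.add_coe, Nat.cast_add]
    rw [one_div, mul_inv, mul_inv, mul_inv, mul_inv]
    simp only [one_div]
  calc ∑' (m₁ : ℕ+), ∑' (m₂ : ℕ+), ∑' (m₃ : ℕ+), ∑' (m₄ : ℕ+), ∑' (m₅ : ℕ+),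
        (1 : ℝ) /
          (((m₁ : ℕ) : ℝ) ^ 4 *
            (((m₁ : ℕ) : ℝ) + ((m₂ : ℕ) : ℝ)) ^ 4 *
            (((m₁ : ℕ) : ℝ) + ((m₂ : ℕ) : ℝ) + ((m₃ : ℕ) : ℝ)) ^ 4 *
            (((m₁ : ℕ) : ℝ) + ((m₂ : ℕ) : ℝ) + ((m₃ : ℕ) : ℝ) + ((m₄ : ℕ) : ℝ)) ^ 4 *
            (((m₁ : ℕ) : ℝ) + ((m₂ : ℕ) : ℝ) + ((m₃ : ℕ) : ℝ) + ((m₄ : ℕ) : ℝ) + ((m₅ : ℕ) : ℝ)) ^ 4)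
      = ∑' (m₁ : ℕ+), ∑' (m₂ : ℕ+), ∑' (m₃ : ℕ+), ∑' (m₄ : ℕ+), ∑' (m₅ : ℕ+),
          G (m₁, m₂, m₃, m₄, m₅) := by
        refine tsum_congr fun m₁ => tsum_congr fun m₂ => tsum_congr fun m₃ =>
          tsum_congr fun m₄ => tsum_congr fun m₅ => ?_
        exact hsummand m₁ m₂ m₃ m₄ m₅
    _ = ∑' p : P5, G p := nested_eq
    _ = T := rfl
    _ = Real.pi ^ 20 / 548828480360160000 := T_val
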